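/- There are exactly 23 integer triples (x, y, z) with x + y + z = 1 satisfying: (−4t₁ + 22)/5, (t₁ + 22)/5, (4t₂ + 77)/5, (−t₂ + 77)/5, (24x − 16y + 4z + 56)/5, (28x + 8y − 12z + 132)/5, and (−4x + 16y − 4z + 49)/5 are all non-negative integers, where t₁ = 3x − 2y − 2z and t₂ = 2x − 3y + 2z; namely the 23 triples (−2,−1,4), (−1,−1,3), (0,−1,2), (1,−1,1), (1,3,−3), (0,3,−2), (−3,0,4), (−2,0,3), (1,0,0), (1,4,−4), (−1,0,2), (0,0,1), (0,2,−1), (−1,2,0), (1,2,−2), (0,1,0), (−2,−2,5), (−1,−2,4), (0,−2,3), (1,−2,2), (1,1,−1), (−2,1,2), (−1,1,1). -/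
import Mathlib


theorem stmt1 :
    {t : ℤ × ℤ × ℤ | t.1 + t.2.1 + t.2.2 = 1 ∧
      (let x := t.1; let y := t.2.1; let z := t.2.2;
      ((5:ℤ) ∣ (-4*(3*x - 2*y - 2*z) + 22) ∧ 0 ≤ (-4*(3*x - 2*y - 2*z) + 22)) ∧
      ((5:ℤ) ∣ ((3*x - 2*y - 2*z) + 22) ∧ 0 ≤ ((3*x - 2*y - 2*z) + 22)) ∧
      ((5:ℤ) ∣ (4*(2*x - 3*y + 2*z) + 77) ∧ 0 ≤ (4*(2*x - 3*y + 2*z) + 77)) ∧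
      ((5:ℤ) ∣ (-(2*x - 3*y + 2*z) + 77) ∧ 0 ≤ (-(2*x - 3*y + 2*z) + 77)) ∧
      ((5:ℤ) ∣ (24*x - 16*y + 4*z + 56) ∧ 0 ≤ (24*x - 16*y + 4*z + 56)) ∧
      ((5:ℤ) ∣ (28*x + 8*y - 12*z + 132) ∧ 0 ≤ (28*x + 8*y - 12*z + 132)) ∧
      ((5:ℤ) ∣ (-4*x + 16*y - 4*z + 49) ∧ 0 ≤ (-4*x + 16*y - 4*z + 49)))} =
    {(-2,-1,4), (-1,-1,3), (0,-1,2), (1,-1,1), (1,3,-3), (0,3,-2), (-3,0,4), (-2,0,3), (1,0,0), (1,4,-4), (-1,0,2), (0,0,1), (0,2,-1), (-1,2,0), (1,2,-2), (0,1,0), (-2,-2,5), (-1,-2,4), (0,-2,3), (1,-2,2), (1,1,-1), (-2,1,2), (-1,1,1)} := by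
  ext ⟨x, y, z⟩
  simp only [Set.mem_setOf_eq, Set.mem_insert_iff, Set.mem_singleton_iff, Prod.mk.injEq]
  constructor
  · rintro ⟨hs, ⟨-, h1⟩, ⟨-, h2⟩, ⟨-, h3⟩, ⟨-, h4⟩, ⟨-, h5⟩, ⟨-, h6⟩, ⟨-, h7⟩⟩
    have hz : z = 1 - x - y := by omega
    subst hz
    have hx1 : x ≤ 1 := by omega
    have hx2 : -4 ≤ x := by omega
    have hy1 : y ≤ 4 := by omega
    have hy2 : -2 ≤ y := by omega
    interval_cases x <;> interval_cases y <;>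
      first
        | (exfalso; omega)
        | norm_num
  · rintro (h|h|h|h|h|h|h|h|h|h|h|h|h|h|h|h|h|h|h|h|h|h|h) <;>
      obtain ⟨h1, h2, h3⟩ := h <;> subst h1 <;> subst h2 <;> subst h3 <;>
      exact ⟨by norm_num, by norm_num⟩
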